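/- Let r > 1 be a real number. Then for every n ≥ 2 and for every choice of real numbers 0 < p_1 < p_2 < ... < p_n, the Loewner matrix L_r has at least one negative eigenvalue. -/

import Mathlib

open Matrix

/-- The Loewner matrix `L_r` associated with points `p 0, ..., p (n-1)` and exponent `r`:
its `(i,j)` entry is `(p i ^ r - p j ^ r) / (p i - p j)` for `i ≠ j` and `r * p i ^ (r-1)`
for `i = j` (powers are real powers `Real.rpow`). -/
noncomputable def loewner {n : ℕ} (p : Fin n → ℝ) (r : ℝ) : Matrix (Fin n) (Fin n) ℝ :=
  Matrix.of fun i j => if i = j then r * p i ^ (r - 1) else (p i ^ r - p j ^ r) / (p i - p j)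

private lemma cont_aux (c : ℝ) : ContinuousOn (fun x : ℝ => x ^ c) (Set.Ici 1) := by
  intro x hx
  have hx0 : x ≠ 0 := by
    have : (1:ℝ) ≤ x := hx
    linarith
  exact (Real.continuousAt_rpow_const x c (Or.inl hx0)).continuousWithinAt

private lemma aux_k (r : ℝ) (hr : 1 < r) {s : ℝ} (hs : 1 < s) :
    0 < 2 * s ^ (r + 1) - (r + 1) * s ^ (2:ℝ) + (r - 1) := by
  set f : ℝ → ℝ := fun x => 2 * x ^ (r + 1) - (r + 1) * x ^ (2:ℝ) + (r - 1) with hf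
  have hmono : StrictMonoOn f (Set.Ici 1) := by
    apply strictMonoOn_of_deriv_pos (convex_Ici 1)
    · exact ((continuousOn_const.mul (cont_aux (r+1))).sub
        (continuousOn_const.mul (cont_aux 2))).add continuousOn_const
    · intro x hx
      rw [interior_Ici] at hx
      have hx1 : 1 < x := hx
      have hx0 : x ≠ 0 := by linarith
      have h1 : HasDerivAt (fun y : ℝ => y ^ (r+1)) ((r+1) * x ^ r) x := by
        have := Real.hasDerivAt_rpow_const (x := x) (p := r+1) (Or.inl hx0)
        rwa [show r + 1 - 1 = r by ring] at this
      have h2 : HasDerivAt (fun y : ℝ => y ^ (2:ℝ)) (2 * x ^ (1:ℝ)) x := by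
        have := Real.hasDerivAt_rpow_const (x := x) (p := (2:ℝ)) (Or.inl hx0)
        rwa [show (2:ℝ) - 1 = 1 by ring] at this
      have hD : HasDerivAt f (2 * ((r+1) * x ^ r) - (r+1) * (2 * x ^ (1:ℝ))) x :=
        ((h1.const_mul 2).sub (h2.const_mul (r+1))).add_const (r-1)
      rw [hD.deriv]
      have hlt : x ^ (1:ℝ) < x ^ r := (Real.rpow_lt_rpow_left_iff hx1).2 hr
      rw [Real.rpow_one] at hlt ⊢
      nlinarith
  have h0 : f 1 = 0 := by simp only [hf, Real.one_rpow]; ring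
  have := hmono (Set.mem_Ici.2 le_rfl) (Set.mem_Ici.2 hs.le) hs
  rw [h0] at this
  exact this

private lemma aux_h (r : ℝ) (hr : 1 < r) {s : ℝ} (hs : 1 < s) :
    r * (s ^ (r + 1) - s ^ (r - 1)) < s ^ (2 * r) - 1 := by
  set f : ℝ → ℝ := fun x => x ^ (2*r) - r * x ^ (r+1) + r * x ^ (r-1) - 1 with hf
  have hmono : StrictMonoOn f (Set.Ici 1) := by
    apply strictMonoOn_of_deriv_pos (convex_Ici 1)
    · exact (((cont_aux (2*r)).sub (continuousOn_const.mul (cont_aux (r+1)))).add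
        (continuousOn_const.mul (cont_aux (r-1)))).sub continuousOn_const
    · intro x hx
      rw [interior_Ici] at hx
      have hx1 : 1 < x := hx
      have hx0' : (0:ℝ) < x := by linarith
      have hx0 : x ≠ 0 := ne_of_gt hx0'
      have h1 : HasDerivAt (fun y : ℝ => y ^ (2*r)) (2*r * x ^ (2*r - 1)) x :=
        Real.hasDerivAt_rpow_const (Or.inl hx0)
      have h2 : HasDerivAt (fun y : ℝ => y ^ (r+1)) ((r+1) * x ^ r) x := by
        have := Real.hasDerivAt_rpow_const (x := x) (p := r+1) (Or.inl hx0)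
        rwa [show r + 1 - 1 = r by ring] at this
      have h3 : HasDerivAt (fun y : ℝ => y ^ (r-1)) ((r-1) * x ^ (r-2)) x := by
        have := Real.hasDerivAt_rpow_const (x := x) (p := r-1) (Or.inl hx0)
        rwa [show r - 1 - 1 = r - 2 by ring] at this
      have hD : HasDerivAt f
          (2*r * x ^ (2*r - 1) - r * ((r+1) * x ^ r) + r * ((r-1) * x ^ (r-2))) x :=
        ((h1.sub (h2.const_mul r)).add (h3.const_mul r)).sub_const 1
      rw [hD.deriv]
      have hk := aux_k r hr hx1
      have e1 : x ^ (r-2) * x ^ (r+1) = x ^ (2*r - 1) := by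
        rw [← Real.rpow_add hx0']; congr 1; ring
      have e2 : x ^ (r-2) * x ^ (2:ℝ) = x ^ r := by
        rw [← Real.rpow_add hx0']; congr 1; ring
      have hP : (0:ℝ) < x ^ (r-2) := Real.rpow_pos_of_pos hx0' _
      have hexp : x ^ (r-2) * (2 * x ^ (r+1) - (r+1) * x ^ (2:ℝ) + (r-1))
          = 2 * x ^ (2*r-1) - (r+1) * x ^ r + (r-1) * x ^ (r-2) := by
        rw [show x ^ (r-2) * (2 * x ^ (r+1) - (r+1) * x ^ (2:ℝ) + (r-1))
            = 2 * (x ^ (r-2) * x ^ (r+1)) - (r+1) * (x ^ (r-2) * x ^ (2:ℝ))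
              + (r-1) * x ^ (r-2) by ring, e1, e2]
      have hpos : 0 < 2 * x ^ (2*r-1) - (r+1) * x ^ r + (r-1) * x ^ (r-2) := by
        rw [← hexp]; exact mul_pos hP hk
      nlinarith
  have h0 : f 1 = 0 := by simp only [hf, Real.one_rpow]; ring
  have := hmono (Set.mem_Ici.2 le_rfl) (Set.mem_Ici.2 hs.le) hs
  rw [h0] at this
  have hfs : 0 < s ^ (2*r) - r * s ^ (r+1) + r * s ^ (r-1) - 1 := this
  linarith

private lemma aux_slope (r : ℝ) (hr : 1 < r) {a b : ℝ} (ha : 0 < a) (hab : a < b) :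
    r * (a * b) ^ ((r - 1) / 2) * (b - a) < b ^ r - a ^ r := by
  have hb : 0 < b := lt_trans ha hab
  have ht0 : 0 < b / a := div_pos hb ha
  have ht1 : 1 < b / a := (one_lt_div ha).2 hab
  set s : ℝ := (b/a) ^ ((1:ℝ)/2) with hsdef
  have hs1 : 1 < s := by
    rw [hsdef, Real.one_lt_rpow_iff_of_pos ht0]
    exact Or.inl ⟨ht1, by norm_num⟩
  have key := aux_h r hr hs1
  -- rewrite powers of s as powers of t = b/a
  have es : ∀ c : ℝ, s ^ c = (b/a) ^ ((1:ℝ)/2 * c) := by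
    intro c; rw [hsdef, ← Real.rpow_mul ht0.le]
  rw [es (r+1), es (r-1), es (2*r), show (1:ℝ)/2 * (2*r) = r by ring] at key
  have e3 : (b/a) ^ ((1:ℝ)/2 * (r+1)) = (b/a) ^ ((r-1)/2) * (b/a) := by
    rw [show (1:ℝ)/2 * (r+1) = (r-1)/2 + 1 by ring, Real.rpow_add_one (ne_of_gt ht0)]
  rw [e3, show (1:ℝ)/2 * (r-1) = (r-1)/2 by ring] at key
  set T : ℝ := (b/a) ^ ((r-1)/2) with hT
  set S : ℝ := (b/a) ^ r with hS
  -- key : r * (T * (b/a) - T) < S - 1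
  have key2 : r * T * (b - a) < (S - 1) * a := by
    have h' : r * (T * (b/a) - T) * a < (S - 1) * a :=
      mul_lt_mul_of_pos_right key ha
    have : r * (T * (b/a) - T) * a = r * T * (b - a) := by
      field_simp
    linarith [h' , this ▸ h']
  have hP : (0:ℝ) < a ^ (r-1) := Real.rpow_pos_of_pos ha _
  have key3 := mul_lt_mul_of_pos_right key2 hP
  -- key3 : r * T * (b - a) * a ^ (r-1) < (S - 1) * a * a ^ (r-1)
  have h1 : S * a ^ r = b ^ r := by
    rw [hS, Real.div_rpow hb.le ha.le, div_mul_cancel₀]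
    exact ne_of_gt (Real.rpow_pos_of_pos ha r)
  have h3 : a ^ r = a ^ (r-1) * a := by
    rw [← Real.rpow_add_one (ne_of_gt ha), show r - 1 + 1 = r by ring]
  have h2 : (a * b) ^ ((r-1)/2) = T * a ^ (r-1) := by
    have ha2 : a ^ (r-1) = (a ^ (2:ℝ)) ^ ((r-1)/2) := by
      rw [← Real.rpow_mul ha.le, show (2:ℝ) * ((r-1)/2) = r - 1 by ring]
    rw [hT, ha2, ← Real.mul_rpow (le_of_lt ht0) (Real.rpow_nonneg ha.le _)]
    congr 1
    rw [Real.rpow_two]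
    field_simp
  calc r * (a * b) ^ ((r-1)/2) * (b - a) = r * T * (b - a) * a ^ (r-1) := by
        rw [h2]; ring
    _ < (S - 1) * a * a ^ (r-1) := key3
    _ = S * a ^ r - a ^ r := by rw [h3]; ring
    _ = b ^ r - a ^ r := by rw [h1]

private lemma aux_det (r : ℝ) (hr : 1 < r) {a b : ℝ} (ha : 0 < a) (hab : a < b) :
    (r * a ^ (r-1)) * (r * b ^ (r-1)) < ((a ^ r - b ^ r) / (a - b)) ^ 2 := by
  have hb : 0 < b := lt_trans ha hab
  have hflip : (a ^ r - b ^ r) / (a - b) = (b ^ r - a ^ r) / (b - a) := by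
    rw [← neg_sub (b ^ r), ← neg_sub b, neg_div_neg_eq]
  rw [hflip]
  have hba : 0 < b - a := by linarith
  have hs := aux_slope r hr ha hab
  have hX : (0:ℝ) < (a*b) ^ ((r-1)/2) := Real.rpow_pos_of_pos (mul_pos ha hb) _
  have hlt : r * (a*b) ^ ((r-1)/2) < (b ^ r - a ^ r) / (b - a) := by
    rw [lt_div_iff₀ hba]; exact hs
  have hnn : 0 ≤ r * (a*b) ^ ((r-1)/2) := by positivity
  have hsq := pow_lt_pow_left₀ hlt hnn (two_ne_zero)
  have hab2 : a ^ (r-1) * b ^ (r-1) = ((a*b) ^ ((r-1)/2)) ^ 2 := by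
    rw [← Real.mul_rpow ha.le hb.le, ← Real.rpow_natCast ((a*b) ^ ((r-1)/2)) 2,
      ← Real.rpow_mul (mul_pos ha hb).le]
    norm_num
  calc (r * a ^ (r-1)) * (r * b ^ (r-1)) = (r * (a*b) ^ ((r-1)/2)) ^ 2 := by
        rw [show (r * a ^ (r-1)) * (r * b ^ (r-1)) = r^2 * (a ^ (r-1) * b ^ (r-1)) by ring,
          hab2]; ring
    _ < ((b ^ r - a ^ r) / (b - a)) ^ 2 := hsq

/-- For every real `r > 1`, every `n ≥ 2` and every choice `0 < p 0 < ⋯ < p (n-1)`,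
the Loewner matrix `L_r` has at least one negative eigenvalue. -/
theorem loewner_exists_negative_eigenvalue (r : ℝ) (hr : 1 < r) :
    ∀ (n : ℕ), 2 ≤ n → ∀ (p : Fin n → ℝ), (∀ i, 0 < p i) → StrictMono p →
    ∀ (hA : (loewner p r).IsHermitian), ∃ i, hA.eigenvalues i < 0 := by
  intro n hn p hp hmono hA
  by_contra hcon
  push_neg at hcon
  have hpsd := hA.posSemidef_iff_eigenvalues_nonneg.mpr hcon
  set L := loewner p r with hL
  set i0 : Fin n := ⟨0, by omega⟩ with hi0
  set i1 : Fin n := ⟨1, by omega⟩ with hi1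
  have hne : i0 ≠ i1 := by simp [hi0, hi1, Fin.ext_iff]
  set a : ℝ := p i0 with haa
  set b : ℝ := p i1 with hbb
  have ha : 0 < a := hp i0
  have hab : a < b := hmono (show i0 < i1 by simp [hi0, hi1, Fin.lt_def])
  set α : ℝ := r * a ^ (r-1) with hα
  set β : ℝ := (a ^ r - b ^ r) / (a - b) with hβ
  set γ : ℝ := r * b ^ (r-1) with hγ
  set x : Fin n → ℝ := fun j => if j = i0 then β else if j = i1 then -α else 0 with hx
  -- sums with support {i0, i1}
  have hsum : ∀ g : Fin n → ℝ, (∀ j, j ≠ i0 → j ≠ i1 → g j = 0) →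
      ∑ j, g j = g i0 + g i1 := by
    intro g hg
    have h1 : ∑ j ∈ Finset.univ, g j = ∑ j ∈ ({i0, i1} : Finset (Fin n)), g j := by
      refine (Finset.sum_subset (Finset.subset_univ _) ?_).symm
      intro j _ hj
      simp only [Finset.mem_insert, Finset.mem_singleton, not_or] at hj
      exact hg j hj.1 hj.2
    rw [h1, Finset.sum_pair hne]
  have hx0 : ∀ j, j ≠ i0 → j ≠ i1 → x j = 0 := by
    intro j h1 h2; simp [hx, h1, h2]
  have hxi0 : x i0 = β := by simp [hx]
  have hxi1 : x i1 = -α := by simp [hx, hne.symm]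
  have hinner : ∀ i, (L *ᵥ x) i = L i i0 * β + L i i1 * (-α) := by
    intro i
    show ∑ j, L i j * x j = _
    rw [hsum _ (fun j h1 h2 => by rw [hx0 j h1 h2, mul_zero]), hxi0, hxi1]
  -- entries
  have hL00 : L i0 i0 = α := by simp [hL, loewner, hα, haa]
  have hL11 : L i1 i1 = γ := by simp [hL, loewner, hγ, hbb]
  have hL01 : L i0 i1 = β := by simp [hL, loewner, hne, hβ, haa, hbb]
  have hL10 : L i1 i0 = β := by
    have : L i1 i0 = (b ^ r - a ^ r) / (b - a) := by
      simp [hL, loewner, hne.symm, haa, hbb]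
    rw [this, hβ, ← neg_sub (b ^ r), ← neg_sub b, neg_div_neg_eq]
  have hq : x ⬝ᵥ (L *ᵥ x) = α * (α * γ - β ^ 2) := by
    show ∑ i, x i * (L *ᵥ x) i = _
    rw [hsum _ (fun j h1 h2 => by rw [hx0 j h1 h2, zero_mul]), hxi0, hxi1,
      hinner i0, hinner i1, hL00, hL01, hL10, hL11]
    ring
  have hdet : α * γ < β ^ 2 := aux_det r hr ha hab
  have hαpos : 0 < α := by
    rw [hα]; positivity
  have hneg : x ⬝ᵥ (L *ᵥ x) < 0 := by
    rw [hq]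
    have : α * γ - β ^ 2 < 0 := by linarith
    exact mul_neg_of_pos_of_neg hαpos this
  have hnn := hpsd.dotProduct_mulVec_nonneg x
  rw [show star x = x from funext fun i => rfl] at hnn
  exact absurd hneg (not_lt.2 hnn)
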